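/- Let A be a C*-algebra, 𝓜(A) its multiplier algebra and ι : A → 𝓜(A) the canonical embedding. Let (b_j)_{j ∈ J} be a norm-bounded net in 𝓜(A) and b ∈ 𝓜(A). Then the following are equivalent: (i) for every a ∈ A, ‖ι(a)·(b_j − b)‖ → 0 and ‖(b_j − b)·ι(a)‖ → 0; (ii) for every a ∈ cA, ‖ι(a)·(b_j − b)‖ → 0 and ‖(b_j − b)·ι(a)‖ → 0. In other words, the restriction of the strict topology to bounded subsets of 𝓜(A) is induced by the seminorms b ↦ ‖ι(a)·b‖, b ↦ ‖b·ι(a)‖ for a ∈ cA. -/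

import Mathlib

open Filter Topology
open scoped ComplexOrder ENNReal NNReal MultiplierAlgebra

noncomputable section

/-- A *state* on a C⋆-algebra: a continuous linear functional into `ℂ` that is nonnegative
on nonnegative elements and has norm `1`. -/
def IsState {E : Type*} [NormedAddCommGroup E] [NormedSpace ℂ E] [PartialOrder E]
    (φ : E →L[ℂ] ℂ) : Prop :=
  (∀ a : E, 0 ≤ a → 0 ≤ φ a) ∧ ‖φ‖ = 1

variable {A : Type*} [NonUnitalCStarAlgebra A] [PartialOrder A] [StarOrderedRing A]

/-- `L` is an extended seminorm on the self-adjoint part `A_sa` of `A`: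
`L (t • b) = |t| * L b` for real `t`, and `L (b + b') ≤ L b + L b'`. -/
def IsESeminorm (L : selfAdjoint A → ℝ≥0∞) : Prop :=
  (∀ (t : ℝ) (b : selfAdjoint A), L (t • b) = (‖t‖₊ : ℝ≥0∞) * L b) ∧
    ∀ b b' : selfAdjoint A, L (b + b') ≤ L b + L b'

/-- The spectral distance `d_L(φ, ψ) = sup { |φ b - ψ b| : b ∈ A_sa, L b ≤ 1 }`,
valued in `[0, ∞]`. -/
def dL (L : selfAdjoint A → ℝ≥0∞) (φ ψ : A → ℂ) : ℝ≥0∞ :=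
  ⨆ b : {b : selfAdjoint A // L b ≤ 1}, (‖φ (b.1 : A) - ψ (b.1 : A)‖₊ : ℝ≥0∞)

/-- An approximate identity for `A`: a net `(I n)` with `0 ≤ I n`, `‖I n‖ ≤ 1`, and
`‖I n * a - a‖ → 0`, `‖a * I n - a‖ → 0` for every `a : A`. -/
def IsApproxUnit {ι : Type*} [Preorder ι] (I : ι → A) : Prop :=
  (∀ n, 0 ≤ I n) ∧ (∀ n, ‖I n‖ ≤ 1) ∧
    ∀ a : A, Tendsto (fun n => ‖I n * a - a‖) atTop (𝓝 0) ∧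
      Tendsto (fun n => ‖a * I n - a‖) atTop (𝓝 0)

/-- A compactly supported bump: `0 ≤ a`, `‖a‖ = 1`, and there is `I_a` with `0 ≤ I_a`,
`‖I_a‖ ≤ 1` and `I_a * a = a`. -/
def IsBump (a : A) : Prop :=
  0 ≤ a ∧ ‖a‖ = 1 ∧ ∃ Ia : A, 0 ≤ Ia ∧ ‖Ia‖ ≤ 1 ∧ Ia * a = a

omit [PartialOrder A] [StarOrderedRing A] in
lemma norm_coe_m (a : A) : ‖(a : 𝓜(ℂ, A))‖ = ‖a‖ := by
  rw [← DoubleCentralizer.norm_fst, DoubleCentralizer.coe_fst]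
  exact ContinuousLinearMap.opNorm_mul_apply ℂ A a

omit [PartialOrder A] [StarOrderedRing A] in
lemma coe_mul_m (x y : A) : ((x * y : A) : 𝓜(ℂ, A)) = (x : 𝓜(ℂ, A)) * (y : 𝓜(ℂ, A)) :=
  map_mul (DoubleCentralizer.coeHom (𝕜 := ℂ) (A := A)) x y

omit [PartialOrder A] [StarOrderedRing A] in
lemma coe_sub_m (x y : A) : ((x - y : A) : 𝓜(ℂ, A)) = (x : 𝓜(ℂ, A)) - (y : 𝓜(ℂ, A)) :=
  map_sub (DoubleCentralizer.coeHom (𝕜 := ℂ) (A := A)) x y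

omit [PartialOrder A] [StarOrderedRing A] in
lemma coe_star_m (x : A) : ((star x : A) : 𝓜(ℂ, A)) = star (x : 𝓜(ℂ, A)) :=
  map_star (DoubleCentralizer.coeHom (𝕜 := ℂ) (A := A)) x

lemma coe_cfcₙ_m {h : A} (hh : 0 ≤ h) (g : ℝ → ℝ) (hg : Continuous g) (hg0 : g 0 = 0) :
    ((cfcₙ g h : A) : 𝓜(ℂ, A)) = cfc g ((h : 𝓜(ℂ, A))) := by
  have h1 : Isometry ((↑) : A → 𝓜(ℂ, A)) :=
    AddMonoidHomClass.isometry_of_norm (DoubleCentralizer.coeHom (𝕜 := ℂ) (A := A)) norm_coe_m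
  have h2 := NonUnitalStarAlgHomClass.map_cfcₙ (DoubleCentralizer.coeHom (𝕜 := ℂ) (A := A)) g h
    (hφ := h1.continuous) (ha := hh.isSelfAdjoint)
    (hφa := hh.isSelfAdjoint.map (DoubleCentralizer.coeHom (𝕜 := ℂ) (A := A)))
  exact h2.trans (cfcₙ_eq_cfc (a := (h : 𝓜(ℂ, A))) (f := g))

lemma bump_factor (a : A) {ε : ℝ} (hε : 0 < ε) :
    ‖a‖ ^ 2 ≤ ε ∨ ∃ c x : A, IsBump c ∧ ‖a - c * x‖ ^ 2 ≤ ε := by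
  set h : A := a * star a with hdef
  have hh : 0 ≤ h := mul_star_self_nonneg a
  set g : ℝ → ℝ := fun t => min 1 (max 0 (2 * t / ε - 1)) with gdef
  have hgc : Continuous g := by fun_prop
  have hg0 : g 0 = 0 := by norm_num [gdef]
  have hg_nonneg : ∀ t, 0 ≤ g t := fun t => le_min zero_le_one (le_max_left 0 _)
  have hg_le_one : ∀ t, g t ≤ 1 := fun t => min_le_left _ _
  have hg_one : ∀ t, ε ≤ t → g t = 1 := by
    intro t ht
    have h2 : (2 : ℝ) ≤ 2 * t / ε := by
      rw [le_div_iff₀ hε]; nlinarith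
    simp only [gdef]
    rw [max_eq_right (by linarith), min_eq_left (by linarith)]
  set c₀ : A := cfcₙ g h with c₀def
  have hma : ((h : A) : 𝓜(ℂ, A)) = (a : 𝓜(ℂ, A)) * star (a : 𝓜(ℂ, A)) := by
    rw [hdef, coe_mul_m, coe_star_m]
  have hhsa : IsSelfAdjoint ((h : 𝓜(ℂ, A))) :=
    hh.isSelfAdjoint.map (DoubleCentralizer.coeHom (𝕜 := ℂ) (A := A))
  set G : 𝓜(ℂ, A) := cfc g ((h : 𝓜(ℂ, A))) with Gdef
  have hGsa : IsSelfAdjoint G := cfc_predicate g ((h : 𝓜(ℂ, A)))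
  have key : ‖a - c₀ * a‖ ^ 2 ≤ ε := by
    have e0 : ((a - c₀ * a : A) : 𝓜(ℂ, A)) = (1 - G) * (a : 𝓜(ℂ, A)) := by
      rw [coe_sub_m, coe_mul_m, coe_cfcₙ_m hh g hgc hg0, sub_mul, one_mul, Gdef]
    have e1 : ‖a - c₀ * a‖ = ‖(1 - G) * (a : 𝓜(ℂ, A))‖ := by
      rw [← norm_coe_m, e0]
    have e2 : ‖(1 - G) * (a : 𝓜(ℂ, A))‖ ^ 2
        = ‖((1 - G) * (a : 𝓜(ℂ, A))) * star ((1 - G) * (a : 𝓜(ℂ, A)))‖ := by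
      rw [CStarRing.norm_self_mul_star, sq]
    have e3 : ((1 - G) * (a : 𝓜(ℂ, A))) * star ((1 - G) * (a : 𝓜(ℂ, A)))
        = (1 - G) * ((h : 𝓜(ℂ, A)) * (1 - G)) := by
      rw [star_mul, star_sub, star_one, hGsa.star_eq, hma]
      noncomm_ring
    have e4 : cfc (fun t : ℝ => (1 - g t) * (t * (1 - g t))) ((h : 𝓜(ℂ, A)))
        = (1 - G) * ((h : 𝓜(ℂ, A)) * (1 - G)) := by
      have h1c : ContinuousOn (fun t : ℝ => 1 - g t) (spectrum ℝ ((h : 𝓜(ℂ, A)))) :=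
        (continuous_const.sub hgc).continuousOn
      have h2c : ContinuousOn (fun t : ℝ => t * (1 - g t)) (spectrum ℝ ((h : 𝓜(ℂ, A)))) :=
        (continuous_id.mul (continuous_const.sub hgc)).continuousOn
      have hsub : cfc (fun t : ℝ => 1 - g t) ((h : 𝓜(ℂ, A))) = 1 - G := by
        rw [cfc_sub (fun _ => (1:ℝ)) g ((h : 𝓜(ℂ, A))) continuousOn_const hgc.continuousOn,
          cfc_const_one ℝ ((h : 𝓜(ℂ, A)))]
      rw [cfc_mul _ _ ((h : 𝓜(ℂ, A))) h1c h2c,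
        cfc_mul (fun t : ℝ => t) (fun t : ℝ => 1 - g t) ((h : 𝓜(ℂ, A))) continuousOn_id
          ((continuous_const.sub hgc).continuousOn),
        hsub, cfc_id' ℝ ((h : 𝓜(ℂ, A)))]
    have e5 : ‖cfc (fun t : ℝ => (1 - g t) * (t * (1 - g t))) ((h : 𝓜(ℂ, A)))‖ ≤ ε := by
      apply norm_cfc_le hε.le
      intro t ht
      have ht0 : 0 ≤ t := by
        refine quasispectrum_nonneg_of_nonneg h hh t ?_
        have := NonUnitalAlgHom.quasispectrum_apply_subset' (R := ℝ) ℂ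
          (DoubleCentralizer.coeHom (𝕜 := ℂ) (A := A)) h
        exact this (spectrum_subset_quasispectrum ℝ _ ht)
      rcases le_or_gt ε t with hte | hte
      · rw [hg_one t hte]
        simpa using hε.le
      · have h1 : 0 ≤ 1 - g t := by linarith [hg_le_one t]
        rw [Real.norm_eq_abs, abs_of_nonneg (by positivity)]
        nlinarith [hg_nonneg t, hg_le_one t,
          mul_nonneg (mul_nonneg ht0 (hg_nonneg t)) h1, mul_nonneg ht0 (hg_nonneg t)]
    rw [e1, e2, e3, ← e4]
    exact e5
  by_cases hc0 : c₀ = 0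
  · left
    rw [hc0, zero_mul, sub_zero] at key
    exact key
  · right
    have hn : 0 < ‖c₀‖ := norm_pos_iff.mpr hc0
    refine ⟨((‖c₀‖⁻¹ : ℝ) : ℂ) • c₀, ((‖c₀‖ : ℝ) : ℂ) • a, ⟨?_, ?_, ?_⟩, ?_⟩
    · refine smul_nonneg ?_ (cfcₙ_nonneg fun t _ => hg_nonneg t)
      rw [Complex.zero_le_real]
      positivity
    · rw [norm_smul]
      simp [abs_of_pos hn, inv_mul_cancel₀ hn.ne']
  -- approximate identity for the bump
    · set f : ℝ → ℝ := fun t => min 1 (max 0 (4 * t / ε - 1)) with fdef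
      have hfc : Continuous f := by fun_prop
      have hf0 : f 0 = 0 := by norm_num [fdef]
      refine ⟨cfcₙ f h, cfcₙ_nonneg fun t _ => le_min zero_le_one (le_max_left 0 _), ?_, ?_⟩
      · apply norm_cfcₙ_le
        intro t ht
        rw [Real.norm_eq_abs, abs_of_nonneg (le_min zero_le_one (le_max_left 0 _))]
        exact min_le_left _ _
      · have hmul : cfcₙ f h * c₀ = c₀ := by
          rw [c₀def, ← cfcₙ_mul f g h (hf := hfc.continuousOn) (hf0 := hf0) (hg := hgc.continuousOn) (hg0 := hg0)]
          apply cfcₙ_congr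
          intro t _
          show f t * g t = g t
          rcases le_or_gt t (ε / 2) with htle | htgt
          · have hg0' : g t = 0 := by
              have hle : 2 * t / ε - 1 ≤ 0 := by
                rw [sub_nonpos, div_le_one hε]; linarith
              simp only [gdef]
              rw [max_eq_left hle, min_eq_right zero_le_one]
            rw [hg0', mul_zero]
          · have hf1 : f t = 1 := by
              have h4 : (1 : ℝ) ≤ 4 * t / ε - 1 := by
                rw [le_sub_iff_add_le, le_div_iff₀ hε]; nlinarith
              simp only [fdef]
              rw [max_eq_right (by linarith), min_eq_left (by linarith)]
            rw [hf1, one_mul]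
        rw [mul_smul_comm, hmul]
    · have hcx : (((‖c₀‖⁻¹ : ℝ) : ℂ) • c₀) * (((‖c₀‖ : ℝ) : ℂ) • a) = c₀ * a := by
        rw [smul_mul_smul_comm]
        norm_cast
        rw [inv_mul_cancel₀ hn.ne', one_smul]
      rw [hcx]
      exact key

lemma half_helper {ε c : ℝ} (hc : c ≠ 0) : c * (ε / (2 * c)) = ε / 2 := by
  field_simp

lemma half_helper' {ε c : ℝ} (hc : c ≠ 0) : (ε / (2 * c)) * c = ε / 2 := by
  rw [mul_comm]; exact half_helper hc


/-- On norm-bounded nets in the multiplier algebra, the strict topology is induced by the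
seminorms coming from compactly supported bumps alone. -/
theorem strict_topology_via_bumps_on_bounded
    {J : Type*} [Preorder J] [Nonempty J] [IsDirected J (· ≤ ·)]
    (b : J → 𝓜(ℂ, A)) (hb : ∃ Cb : ℝ, ∀ j, ‖b j‖ ≤ Cb) (b₀ : 𝓜(ℂ, A)) :
    ((∀ a : A, Tendsto (fun j => ‖(a : 𝓜(ℂ, A)) * (b j - b₀)‖) atTop (𝓝 0) ∧
        Tendsto (fun j => ‖(b j - b₀) * (a : 𝓜(ℂ, A))‖) atTop (𝓝 0)) ↔
      (∀ a : A, IsBump a →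
        Tendsto (fun j => ‖(a : 𝓜(ℂ, A)) * (b j - b₀)‖) atTop (𝓝 0) ∧
        Tendsto (fun j => ‖(b j - b₀) * (a : 𝓜(ℂ, A))‖) atTop (𝓝 0))) := by
  constructor
  · intro H a _
    exact H a
  · intro H a
    obtain ⟨Cb, hCb⟩ := hb
    have hCb0 : 0 ≤ Cb := (norm_nonneg (b (Classical.arbitrary J))).trans (hCb _)
    set C : ℝ := Cb + ‖b₀‖ + 1 with Cdef
    have hC : 0 < C := by positivity
    have hmC : ∀ j, ‖b j - b₀‖ ≤ C := fun j =>
      (norm_sub_le _ _).trans (by have := hCb j; rw [Cdef]; linarith)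
    constructor
    · -- left seminorm
      rw [Metric.tendsto_nhds]
      intro ε hε
      set δ : ℝ := ε / (2 * C) with δdef
      have hδ : 0 < δ := by positivity
      have hδC : δ * C = ε / 2 := by rw [δdef]; field_simp
      rcases bump_factor (star a) (pow_pos hδ 2) with hsmall | ⟨c, x, hc, hfac⟩
      · have hna : ‖a‖ ≤ δ := by
          have := Real.sqrt_le_sqrt hsmall
          rwa [Real.sqrt_sq (norm_nonneg _), Real.sqrt_sq hδ.le, norm_star] at this
        refine Eventually.of_forall fun j => ?_
        rw [Real.dist_eq, sub_zero, abs_of_nonneg (norm_nonneg _)]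
        calc ‖(a : 𝓜(ℂ, A)) * (b j - b₀)‖ ≤ ‖(a : 𝓜(ℂ, A))‖ * ‖b j - b₀‖ := norm_mul_le _ _
          _ ≤ δ * C := by
              rw [norm_coe_m]
              exact mul_le_mul hna (hmC j) (norm_nonneg _) hδ.le
          _ < ε := by rw [hδC]; linarith
      · have hfac' : ‖star a - c * x‖ ≤ δ := by
          have := Real.sqrt_le_sqrt hfac
          rwa [Real.sqrt_sq (norm_nonneg _), Real.sqrt_sq hδ.le] at this
        have hkey : ‖a - star x * c‖ ≤ δ := by
          have hrw : a - star x * c = star (star a - c * x) := by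
            rw [star_sub, star_star, star_mul, hc.1.isSelfAdjoint.star_eq]
          rw [hrw, norm_star]
          exact hfac'
        have h1 := (H c hc).1
        rw [Metric.tendsto_nhds] at h1
        have hx1 : 0 < ‖x‖ + 1 := by positivity
        filter_upwards [h1 (ε / (2 * (‖x‖ + 1))) (by positivity)] with j hj
        rw [Real.dist_eq, sub_zero, abs_of_nonneg (norm_nonneg _)] at hj ⊢
        have split : (a : 𝓜(ℂ, A)) * (b j - b₀)
            = ((a - star x * c : A) : 𝓜(ℂ, A)) * (b j - b₀)
              + ((star x : A) : 𝓜(ℂ, A)) * (((c : A) : 𝓜(ℂ, A)) * (b j - b₀)) := by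
          rw [coe_sub_m, coe_mul_m, sub_mul, ← mul_assoc, sub_add_cancel]
        rw [split]
        calc ‖_ + _‖ ≤ ‖((a - star x * c : A) : 𝓜(ℂ, A)) * (b j - b₀)‖
              + ‖((star x : A) : 𝓜(ℂ, A)) * (((c : A) : 𝓜(ℂ, A)) * (b j - b₀))‖ :=
            norm_add_le _ _
          _ ≤ ‖a - star x * c‖ * C + ‖x‖ * ‖((c : A) : 𝓜(ℂ, A)) * (b j - b₀)‖ := by
              gcongr
              · calc ‖((a - star x * c : A) : 𝓜(ℂ, A)) * (b j - b₀)‖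
                    ≤ ‖((a - star x * c : A) : 𝓜(ℂ, A))‖ * ‖b j - b₀‖ := norm_mul_le _ _
                  _ ≤ ‖a - star x * c‖ * C := by
                      rw [norm_coe_m]
                      exact mul_le_mul le_rfl (hmC j) (norm_nonneg _) (norm_nonneg _)
              · calc ‖((star x : A) : 𝓜(ℂ, A)) * (((c : A) : 𝓜(ℂ, A)) * (b j - b₀))‖
                    ≤ ‖((star x : A) : 𝓜(ℂ, A))‖ * ‖((c : A) : 𝓜(ℂ, A)) * (b j - b₀)‖ :=
                    norm_mul_le _ _
                  _ = ‖x‖ * ‖((c : A) : 𝓜(ℂ, A)) * (b j - b₀)‖ := by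
                      rw [norm_coe_m, norm_star]
          _ < ε := by
              have e1 : ‖a - star x * c‖ * C ≤ ε / 2 := by
                calc ‖a - star x * c‖ * C ≤ δ * C :=
                    mul_le_mul hkey le_rfl hC.le hδ.le
                  _ = ε / 2 := hδC
              have e2 : ‖x‖ * ‖((c : A) : 𝓜(ℂ, A)) * (b j - b₀)‖ < ε / 2 := by
                calc ‖x‖ * ‖((c : A) : 𝓜(ℂ, A)) * (b j - b₀)‖
                    ≤ (‖x‖ + 1) * ‖((c : A) : 𝓜(ℂ, A)) * (b j - b₀)‖ :=
                      mul_le_mul_of_nonneg_right (by linarith) (norm_nonneg _)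
                  _ < (‖x‖ + 1) * (ε / (2 * (‖x‖ + 1))) := mul_lt_mul_of_pos_left hj hx1
                  _ = ε / 2 := half_helper hx1.ne'
              calc _ ≤ ε / 2 + _ := by exact add_le_add_left e1 _
                _ < ε / 2 + ε / 2 := by exact add_lt_add_right e2 _
                _ = ε := add_halves ε
    · -- right seminorm
      rw [Metric.tendsto_nhds]
      intro ε hε
      set δ : ℝ := ε / (2 * C) with δdef
      have hδ : 0 < δ := by positivity
      have hδC : δ * C = ε / 2 := by rw [δdef]; field_simp
      rcases bump_factor a (pow_pos hδ 2) with hsmall | ⟨c, x, hc, hfac⟩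
      · have hna : ‖a‖ ≤ δ := by
          have := Real.sqrt_le_sqrt hsmall
          rwa [Real.sqrt_sq (norm_nonneg _), Real.sqrt_sq hδ.le] at this
        refine Eventually.of_forall fun j => ?_
        rw [Real.dist_eq, sub_zero, abs_of_nonneg (norm_nonneg _)]
        calc ‖(b j - b₀) * (a : 𝓜(ℂ, A))‖ ≤ ‖b j - b₀‖ * ‖(a : 𝓜(ℂ, A))‖ := norm_mul_le _ _
          _ ≤ C * δ := by
              rw [norm_coe_m]
              exact mul_le_mul (hmC j) hna (norm_nonneg _) hC.le
          _ < ε := by rw [mul_comm, hδC]; linarith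
      · have hkey : ‖a - c * x‖ ≤ δ := by
          have := Real.sqrt_le_sqrt hfac
          rwa [Real.sqrt_sq (norm_nonneg _), Real.sqrt_sq hδ.le] at this
        have h1 := (H c hc).2
        rw [Metric.tendsto_nhds] at h1
        have hx1 : 0 < ‖x‖ + 1 := by positivity
        filter_upwards [h1 (ε / (2 * (‖x‖ + 1))) (by positivity)] with j hj
        rw [Real.dist_eq, sub_zero, abs_of_nonneg (norm_nonneg _)] at hj ⊢
        have split : (b j - b₀) * (a : 𝓜(ℂ, A))
            = (b j - b₀) * ((a - c * x : A) : 𝓜(ℂ, A))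
              + ((b j - b₀) * ((c : A) : 𝓜(ℂ, A))) * ((x : A) : 𝓜(ℂ, A)) := by
          rw [coe_sub_m, coe_mul_m, mul_sub, mul_assoc, sub_add_cancel]
        rw [split]
        calc ‖_ + _‖ ≤ ‖(b j - b₀) * ((a - c * x : A) : 𝓜(ℂ, A))‖
              + ‖((b j - b₀) * ((c : A) : 𝓜(ℂ, A))) * ((x : A) : 𝓜(ℂ, A))‖ :=
            norm_add_le _ _
          _ ≤ C * ‖a - c * x‖ + ‖(b j - b₀) * ((c : A) : 𝓜(ℂ, A))‖ * ‖x‖ := by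
              gcongr
              · calc ‖(b j - b₀) * ((a - c * x : A) : 𝓜(ℂ, A))‖
                    ≤ ‖b j - b₀‖ * ‖((a - c * x : A) : 𝓜(ℂ, A))‖ := norm_mul_le _ _
                  _ ≤ C * ‖a - c * x‖ := by
                      rw [norm_coe_m]
                      exact mul_le_mul (hmC j) le_rfl (norm_nonneg _) hC.le
              · calc ‖((b j - b₀) * ((c : A) : 𝓜(ℂ, A))) * ((x : A) : 𝓜(ℂ, A))‖
                    ≤ ‖(b j - b₀) * ((c : A) : 𝓜(ℂ, A))‖ * ‖((x : A) : 𝓜(ℂ, A))‖ :=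
                    norm_mul_le _ _
                  _ = ‖(b j - b₀) * ((c : A) : 𝓜(ℂ, A))‖ * ‖x‖ := by rw [norm_coe_m]
          _ < ε := by
              have e1 : C * ‖a - c * x‖ ≤ ε / 2 := by
                calc C * ‖a - c * x‖ ≤ C * δ := by gcongr
                  _ = ε / 2 := by rw [mul_comm]; exact hδC
              have e2 : ‖(b j - b₀) * ((c : A) : 𝓜(ℂ, A))‖ * ‖x‖ < ε / 2 := by
                calc ‖(b j - b₀) * ((c : A) : 𝓜(ℂ, A))‖ * ‖x‖
                    ≤ ‖(b j - b₀) * ((c : A) : 𝓜(ℂ, A))‖ * (‖x‖ + 1) :=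
                      mul_le_mul_of_nonneg_left (by linarith) (norm_nonneg _)
                  _ < (ε / (2 * (‖x‖ + 1))) * (‖x‖ + 1) := mul_lt_mul_of_pos_right hj hx1
                  _ = ε / 2 := half_helper' hx1.ne'
              calc _ ≤ ε / 2 + _ := by exact add_le_add_left e1 _
                _ < ε / 2 + ε / 2 := by exact add_lt_add_right e2 _
                _ = ε := add_halves ε
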